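/- Fix reals μ > 0, k > 0, η > 0, and d, Δd with 0 ≤ d ≤ 1 and Δd ≥ 0, set g(d) := (1−d)² + η, and let ε, Δε be symmetric real 3×3 matrices with tr ε > 0. Define Δσ := g(d)[2μ Δε^dev + k (tr Δε) I] − 2(1−d)[2μ ε^dev + k (tr ε) I] Δd, and assume tr Δσ = 0, Δσ · ε^dev = 0 and Δσ · Δε = 0. Then the active strain energy Ψ⁺(e) := μ (e^dev · e^dev) + (k/2) ⟨tr e⟩₊² is monotone under the fixed-stress update: Ψ⁺(ε + Δε) ≥ Ψ⁺(ε). -/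
import Mathlib


open Matrix

/-- Deviatoric part of a 3×3 real matrix. -/
noncomputable def dev (A : Matrix (Fin 3) (Fin 3) ℝ) : Matrix (Fin 3) (Fin 3) ℝ :=
  A - (A.trace / 3) • (1 : Matrix (Fin 3) (Fin 3) ℝ)

/-- Frobenius inner product of 3×3 real matrices. -/
noncomputable def frob (A B : Matrix (Fin 3) (Fin 3) ℝ) : ℝ := (Aᵀ * B).trace

/-- Active strain energy of the volumetric–deviatoric split. -/
noncomputable def activeEnergy (μ k : ℝ) (e : Matrix (Fin 3) (Fin 3) ℝ) : ℝ :=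
  μ * frob (dev e) (dev e) + k / 2 * (max e.trace 0) ^ 2

lemma frob_entries (A B : Matrix (Fin 3) (Fin 3) ℝ) :
    frob A B = ∑ i, ∑ j, A j i * B j i := by
  simp [frob, Matrix.trace, Matrix.mul_apply, Matrix.diag]

lemma frob_self_nonneg (A : Matrix (Fin 3) (Fin 3) ℝ) : 0 ≤ frob A A := by
  rw [frob_entries]
  exact Finset.sum_nonneg fun i _ => Finset.sum_nonneg fun j _ => mul_self_nonneg _

lemma frob_comm (A B : Matrix (Fin 3) (Fin 3) ℝ) : frob A B = frob B A := by
  rw [frob_entries, frob_entries]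
  exact Finset.sum_congr rfl fun i _ => Finset.sum_congr rfl fun j _ => mul_comm _ _

lemma frob_add_left (A B C : Matrix (Fin 3) (Fin 3) ℝ) :
    frob (A + B) C = frob A C + frob B C := by
  simp [frob, Matrix.transpose_add, Matrix.add_mul]

lemma frob_sub_left (A B C : Matrix (Fin 3) (Fin 3) ℝ) :
    frob (A - B) C = frob A C - frob B C := by
  simp [frob, Matrix.transpose_sub, Matrix.sub_mul]

lemma frob_smul_left (r : ℝ) (A B : Matrix (Fin 3) (Fin 3) ℝ) :
    frob (r • A) B = r * frob A B := by
  simp [frob, Matrix.transpose_smul, Matrix.smul_mul]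

lemma frob_add_right (A B C : Matrix (Fin 3) (Fin 3) ℝ) :
    frob A (B + C) = frob A B + frob A C := by
  simp [frob, Matrix.mul_add]

lemma frob_one_left (A : Matrix (Fin 3) (Fin 3) ℝ) : frob 1 A = A.trace := by
  simp [frob]

lemma dev_trace (A : Matrix (Fin 3) (Fin 3) ℝ) : (dev A).trace = 0 := by
  simp [dev, Matrix.trace_smul, Matrix.trace_one]

lemma dev_add (A B : Matrix (Fin 3) (Fin 3) ℝ) : dev (A + B) = dev A + dev B := by
  simp only [dev, Matrix.trace_add, add_div, add_smul]
  abel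

theorem fixed_stress_energy_monotone
    (μ k η d Δd : ℝ) (hμ : 0 < μ) (hk : 0 < k) (hη : 0 < η)
    (hd0 : 0 ≤ d) (hd1 : d ≤ 1) (hΔd : 0 ≤ Δd)
    (ε Δε : Matrix (Fin 3) (Fin 3) ℝ) (hε : ε.IsSymm) (hΔε : Δε.IsSymm)
    (htr : 0 < ε.trace)
    (Δσ : Matrix (Fin 3) (Fin 3) ℝ)
    (hΔσ : Δσ = ((1 - d) ^ 2 + η) •
        ((2 * μ) • dev Δε + (k * Δε.trace) • (1 : Matrix (Fin 3) (Fin 3) ℝ))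
      - (2 * (1 - d) * Δd) •
        ((2 * μ) • dev ε + (k * ε.trace) • (1 : Matrix (Fin 3) (Fin 3) ℝ)))
    (h0 : Δσ.trace = 0) (h1 : frob Δσ (dev ε) = 0) (h2 : frob Δσ Δε = 0) :
    activeEnergy μ k ε ≤ activeEnergy μ k (ε + Δε) := by
  have hg : (0:ℝ) < (1 - d) ^ 2 + η := by positivity
  have hc : (0:ℝ) ≤ 2 * (1 - d) * Δd :=
    mul_nonneg (mul_nonneg (by norm_num) (by linarith)) hΔd
  subst hΔσ
  -- expand trace condition
  simp only [Matrix.trace_sub, Matrix.trace_smul, Matrix.trace_add, dev_trace,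
    Matrix.trace_one, smul_eq_mul] at h0
  -- expand frobenius condition h1
  simp only [frob_sub_left, frob_smul_left, frob_add_left, frob_one_left, dev_trace,
    frob_comm (dev Δε) (dev ε)] at h1
  norm_num at h0 h1
  set t := ε.trace with ht
  set s := Δε.trace with hs
  set P := frob (dev ε) (dev ε) with hP
  set Q := frob (dev ε) (dev Δε) with hQ
  set R := frob (dev Δε) (dev Δε) with hR
  have hPn : 0 ≤ P := frob_self_nonneg _
  have hRn : 0 ≤ R := frob_self_nonneg _
  -- from h0 : g * s = c * t  (up to factor 3k)
  have hs0 : 0 ≤ s := by nlinarith [mul_pos hk hg, mul_nonneg (mul_nonneg hk.le hc) htr.le]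
  have hQ0 : 0 ≤ Q := by nlinarith [mul_pos hμ hg, mul_nonneg (mul_nonneg hμ.le hc) hPn]
  have hdev : frob (dev (ε + Δε)) (dev (ε + Δε)) = P + 2 * Q + R := by
    rw [dev_add, frob_add_left, frob_add_right, frob_add_right,
      frob_comm (dev Δε) (dev ε)]
    ring
  simp only [activeEnergy, Matrix.trace_add, hdev, ← ht, ← hs]
  rw [max_eq_left htr.le, max_eq_left (by linarith : (0:ℝ) ≤ t + s)]
  nlinarith [mul_nonneg (mul_nonneg hk.le htr.le) hs0, sq_nonneg s]
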